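/- arXiv:2603.05967 — 4 statements merged into one kernel-verified Lean document; each statement's English description precedes it below -/
import Mathlib

section
/- For fixed x, y in Γ, as λ → 0+ we have λ^{|x|_μ} · K(x,y | λ) → K_{μ̄}(x,y), where K(x,y|λ) = G(x,y|λ)/G(e,y|λ) is the λ-Martin kernel and K_{μ̄}(x,y) = P^{|y|-|x|}(x,y)/P^{|y|}(e,y) if e, x, y are aligned on a word geodesic (i.e. |x^{-1}y|_μ = |y|_μ - |x|_μ) and 0 otherwise. -/
open Filter Topology
open scoped Classical

/-- n-fold convolution power of a measure `μ` on a group, with `μ^{*0} = δ_e`. -/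
noncomputable def convPow {G : Type*} [Group G] (μ : G → ℝ) : ℕ → G → ℝ
  | 0 => fun x => if x = 1 then 1 else 0
  | n + 1 => fun x => ∑ᶠ y, convPow μ n y * μ (y⁻¹ * x)

/-- The word semi-norm `|x|_μ = inf {n : μ^{*n}(x) > 0}`. -/
noncomputable def munorm {G : Type*} [Group G] (μ : G → ℝ) (x : G) : ℕ :=
  sInf {n | 0 < convPow μ n x}

/-- The λ-Green function `G(x,y|λ) = Σ_{n≥0} λ^n P^n(x,y)` with `P^n(x,y) = μ^{*n}(x⁻¹y)`. -/
noncomputable def lamGreen {G : Type*} [Group G] (μ : G → ℝ) (lam : ℝ) (x y : G) : ℝ :=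
  ∑' n : ℕ, lam ^ n * convPow μ n (x⁻¹ * y)

open Function
open scoped Pointwise

section aux
variable {G : Type*} [Group G] (μ : G → ℝ)

lemma my_finsum_le_finsum {α : Type*} {f g : α → ℝ} (h : ∀ i, f i ≤ g i)
    (hf : (support f).Finite) (hg : (support g).Finite) : ∑ᶠ i, f i ≤ ∑ᶠ i, g i := by
  classical
  have hsub : support f ⊆ ↑(hf.union hg).toFinset := by
    intro i hi; simp [Set.Finite.mem_toFinset]; exact Or.inl hi
  have hsub' : support g ⊆ ↑(hf.union hg).toFinset := by
    intro i hi; simp [Set.Finite.mem_toFinset]; exact Or.inr hi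
  rw [finsum_eq_sum_of_support_subset _ hsub, finsum_eq_sum_of_support_subset _ hsub']
  exact Finset.sum_le_sum fun i _ => h i

lemma convPow_nonneg (hnn : ∀ x, 0 ≤ μ x) : ∀ n x, 0 ≤ convPow μ n x := by
  intro n
  induction n with
  | zero => intro x; simp [convPow]; positivity
  | succ n ih =>
    intro x
    exact finsum_nonneg fun y => mul_nonneg (ih y) (hnn _)

lemma convPow_support_finite (hfin : (support μ).Finite) :
    ∀ n, (support (convPow μ n)).Finite := by
  intro n
  induction n with
  | zero =>
    apply Set.Finite.subset (Set.finite_singleton (1 : G))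
    intro x hx
    simp only [support, convPow, Set.mem_setOf_eq] at hx
    by_contra hne
    simp only [Set.mem_singleton_iff] at hne
    simp [hne] at hx
  | succ n ih =>
    apply Set.Finite.subset (ih.mul hfin)
    intro x hx
    simp only [support, convPow, Set.mem_setOf_eq] at hx
    have : ∃ y, convPow μ n y * μ (y⁻¹ * x) ≠ 0 := by
      by_contra h; push_neg at h
      exact hx (finsum_eq_zero_of_forall_eq_zero h)
    obtain ⟨y, hy⟩ := this
    have h1 : convPow μ n y ≠ 0 := fun h => hy (by simp [h])
    have h2 : μ (y⁻¹ * x) ≠ 0 := fun h => hy (by simp [h])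
    exact ⟨y, h1, y⁻¹ * x, h2, by group⟩

lemma convPow_finsum_eq_one (hnn : ∀ x, 0 ≤ μ x) (hprob : ∑ᶠ x, μ x = 1)
    (hfin : (support μ).Finite) : ∀ n, ∑ᶠ x, convPow μ n x = 1 := by
  intro n
  induction n with
  | zero =>
    rw [show (convPow μ 0 : G → ℝ) = fun x => if x = 1 then 1 else 0 from rfl]
    rw [finsum_eq_single _ (1 : G) (fun x hx => by simp [hx])]
    simp
  | succ n ih =>
    set A := (convPow_support_finite μ hfin n).toFinset with hA
    set S := hfin.toFinset with hS
    have hinner : ∀ x : G, convPow μ (n+1) x = ∑ y ∈ A, convPow μ n y * μ (y⁻¹ * x) := by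
      intro x
      rw [show convPow μ (n+1) x = ∑ᶠ y, convPow μ n y * μ (y⁻¹ * x) from rfl]
      apply finsum_eq_sum_of_support_subset
      intro z hz
      simp only [support, Set.mem_setOf_eq] at hz
      have : convPow μ n z ≠ 0 := fun h => hz (by simp [h])
      simpa [hA, Set.Finite.mem_toFinset] using this
    have houter : support (convPow μ (n+1)) ⊆ ↑(A * S) := by
      intro x hx
      simp only [support, Set.mem_setOf_eq, hinner] at hx
      have : ∃ y ∈ A, convPow μ n y * μ (y⁻¹ * x) ≠ 0 := by
        by_contra h; push_neg at h
        exact hx (Finset.sum_eq_zero h)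
      obtain ⟨z, hzA, hz⟩ := this
      have h2 : μ (z⁻¹ * x) ≠ 0 := fun h => hz (by simp [h])
      have : z⁻¹ * x ∈ S := by simpa [hS, Set.Finite.mem_toFinset] using h2
      have hm := Finset.mul_mem_mul hzA this
      exact Finset.mem_coe.mpr (by simpa using hm)
    rw [finsum_eq_sum_of_support_subset _ houter]
    calc ∑ x ∈ A * S, convPow μ (n+1) x
        = ∑ x ∈ A * S, ∑ y ∈ A, convPow μ n y * μ (y⁻¹ * x) := by
          exact Finset.sum_congr rfl fun x _ => hinner x
      _ = ∑ y ∈ A, ∑ x ∈ A * S, convPow μ n y * μ (y⁻¹ * x) := Finset.sum_comm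
      _ = ∑ y ∈ A, convPow μ n y * ∑ x ∈ A * S, μ (y⁻¹ * x) := by
          exact Finset.sum_congr rfl fun y _ => (Finset.mul_sum _ _ _).symm
      _ = ∑ y ∈ A, convPow μ n y * 1 := by
          refine Finset.sum_congr rfl fun y hy => ?_
          congr 1
          have hsupp : support (fun x => μ (y⁻¹ * x)) ⊆ ↑(A * S) := by
            intro x hx
            simp only [support, Set.mem_setOf_eq] at hx
            have : y⁻¹ * x ∈ S := by simpa [hS, Set.Finite.mem_toFinset] using hx
            have hm := Finset.mul_mem_mul hy this
            exact Finset.mem_coe.mpr (by simpa using hm)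
          rw [← finsum_eq_sum_of_support_subset _ hsupp]
          rw [← hprob]
          exact finsum_comp_equiv (Equiv.mulLeft y⁻¹)
      _ = 1 := by
          simp only [mul_one]
          have := finsum_eq_sum_of_support_subset (convPow μ n)
            (s := A) (by intro z hz; simpa [hA, Set.Finite.mem_toFinset] using hz)
          rw [← this, ih]

lemma convPow_le_one (hnn : ∀ x, 0 ≤ μ x) (hprob : ∑ᶠ x, μ x = 1)
    (hfin : (support μ).Finite) (n : ℕ) (x : G) : convPow μ n x ≤ 1 := by
  rw [← convPow_finsum_eq_one μ hnn hprob hfin n]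
  exact single_le_finsum x (convPow_support_finite μ hfin n) (convPow_nonneg μ hnn n)

end aux

section aux2
variable {G : Type*} [Group G] (μ : G → ℝ)

lemma convPow_superadd (hnn : ∀ x, 0 ≤ μ x) (hfin : (support μ).Finite) (m : ℕ) :
    ∀ (n : ℕ) (w z : G), convPow μ m w * convPow μ n (w⁻¹ * z) ≤ convPow μ (m + n) z := by
  intro n
  induction n with
  | zero =>
    intro w z
    by_cases h : w⁻¹ * z = 1
    · have hwz : w = z := by
        rw [inv_mul_eq_one] at h; exact h
      simp [convPow, h, hwz]
    · simp only [convPow, h, if_false, mul_zero]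
      exact convPow_nonneg μ hnn m z
  | succ n ih =>
    intro w z
    have hstep : convPow μ (n+1) (w⁻¹ * z) = ∑ᶠ u, convPow μ n u * μ (u⁻¹ * (w⁻¹ * z)) := rfl
    have hfinsupp : (support fun u => convPow μ n u * μ (u⁻¹ * (w⁻¹ * z))).Finite := by
      apply Set.Finite.subset (convPow_support_finite μ hfin n)
      intro u hu
      simp only [support, Set.mem_setOf_eq] at hu ⊢
      intro h; exact hu (by simp [h])
    have hpull : convPow μ m w * convPow μ (n+1) (w⁻¹ * z)
        = ∑ᶠ u, convPow μ m w * (convPow μ n u * μ (u⁻¹ * (w⁻¹ * z))) := by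
      rw [hstep]
      exact mul_finsum _ _
    rw [hpull]
    have hRHS : convPow μ (m + (n+1)) z = ∑ᶠ u, convPow μ (m+n) (w * u) * μ ((w * u)⁻¹ * z) := by
      have h1 : convPow μ (m + (n+1)) z = ∑ᶠ v, convPow μ (m+n) v * μ (v⁻¹ * z) := rfl
      rw [h1]
      exact (finsum_comp_equiv (Equiv.mulLeft w) (f := fun v => convPow μ (m+n) v * μ (v⁻¹ * z))).symm
    rw [hRHS]
    apply my_finsum_le_finsum
    · intro u
      have h1 : convPow μ m w * (convPow μ n u * μ (u⁻¹ * (w⁻¹ * z)))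
          = (convPow μ m w * convPow μ n u) * μ (u⁻¹ * (w⁻¹ * z)) := by ring
      rw [h1]
      have h2 : u⁻¹ * (w⁻¹ * z) = (w * u)⁻¹ * z := by group
      rw [h2]
      apply mul_le_mul_of_nonneg_right _ (hnn _)
      have := ih w (w * u)
      simpa using this
    · apply Set.Finite.subset hfinsupp
      intro u hu
      simp only [support, Set.mem_setOf_eq] at hu ⊢
      intro h; exact hu (by simp [h])
    · apply Set.Finite.subset
        ((convPow_support_finite μ hfin (m+n)).preimage
          (Set.injOn_of_injective (mul_right_injective w)))
      intro u hu
      simp only [support, Set.mem_setOf_eq, Set.mem_preimage] at hu ⊢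
      intro h; exact hu (by simp [h])

lemma convPow_munorm_pos (hadm : ∀ x : G, ∃ n, 0 < convPow μ n x) (g : G) :
    0 < convPow μ (munorm μ g) g :=
  Nat.sInf_mem (hadm g)

lemma convPow_eq_zero_of_lt (hnn : ∀ x, 0 ≤ μ x) {n : ℕ} {g : G} (h : n < munorm μ g) :
    convPow μ n g = 0 := by
  have := Nat.notMem_of_lt_sInf h
  simp only [Set.mem_setOf_eq, not_lt] at this
  exact le_antisymm this (convPow_nonneg μ hnn n g)

lemma munorm_le_add (hnn : ∀ x, 0 ≤ μ x) (hfin : (support μ).Finite)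
    (hadm : ∀ x : G, ∃ n, 0 < convPow μ n x) (x y : G) :
    munorm μ y ≤ munorm μ x + munorm μ (x⁻¹ * y) := by
  apply Nat.sInf_le
  have h1 := convPow_munorm_pos μ hadm x
  have h2 := convPow_munorm_pos μ hadm (x⁻¹ * y)
  have := convPow_superadd μ hnn hfin (munorm μ x) (munorm μ (x⁻¹ * y)) x y
  exact Set.mem_setOf_eq ▸ lt_of_lt_of_le (mul_pos h1 h2) this

end aux2

section aux3

lemma aux_summable {lam : ℝ} (h0 : 0 ≤ lam) (h1 : lam < 1) {d : ℕ → ℝ}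
    (hd0 : ∀ n, 0 ≤ d n) (hd1 : ∀ n, d n ≤ 1) : Summable (fun n => lam ^ n * d n) := by
  apply Summable.of_nonneg_of_le (fun n => mul_nonneg (pow_nonneg h0 n) (hd0 n))
    (fun n => mul_le_of_le_one_right (pow_nonneg h0 n) (hd1 n))
  exact summable_geometric_of_lt_one h0 h1

lemma aux_tendsto {d : ℕ → ℝ} (hd0 : ∀ n, 0 ≤ d n) (hd1 : ∀ n, d n ≤ 1) :
    Tendsto (fun lam : ℝ => ∑' n, lam ^ n * d n) (nhdsWithin 0 (Set.Ioi 0)) (nhds (d 0)) := by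
  have hmem : Set.Ioo (0:ℝ) (1/2) ∈ nhdsWithin (0:ℝ) (Set.Ioi 0) :=
    Ioo_mem_nhdsGT_of_mem (by norm_num)
  apply tendsto_of_tendsto_of_tendsto_of_le_of_le' (g := fun _ => d 0)
      (h := fun lam => d 0 + 2 * lam)
  · exact tendsto_const_nhds
  · have : Tendsto (fun lam : ℝ => d 0 + 2 * lam) (nhds 0) (nhds (d 0 + 2 * 0)) := by
      exact (tendsto_const_nhds.add (tendsto_id.const_mul 2))
    simpa using this.mono_left nhdsWithin_le_nhds
  · filter_upwards [hmem] with lam hlam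
    have hsum : Summable (fun n => lam ^ n * d n) :=
      aux_summable hlam.1.le (by linarith [hlam.2]) hd0 hd1
    have := Summable.le_tsum hsum 0 (fun i _ => mul_nonneg (pow_nonneg hlam.1.le i) (hd0 i))
    simpa using this
  · filter_upwards [hmem] with lam hlam
    have hl0 : (0:ℝ) ≤ lam := hlam.1.le
    have hl1 : lam < 1 := by linarith [hlam.2]
    have hsum : Summable (fun n => lam ^ n * d n) := aux_summable hl0 hl1 hd0 hd1
    have hsplit := Summable.sum_add_tsum_nat_add 1 hsum
    have htail : ∑' n, lam ^ (n+1) * d (n+1) ≤ 2 * lam := by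
      have hsum2 : Summable (fun n : ℕ => lam * (1/2) ^ n) :=
        (summable_geometric_of_lt_one (by norm_num) (by norm_num)).mul_left lam
      have hle : ∀ n : ℕ, lam ^ (n+1) * d (n+1) ≤ lam * (1/2) ^ n := by
        intro n
        have h1 : lam ^ (n+1) = lam * lam ^ n := by ring
        have h2 : lam ^ n ≤ (1/2) ^ n := pow_le_pow_left₀ hl0 hlam.2.le n
        calc lam ^ (n+1) * d (n+1) ≤ lam ^ (n+1) * 1 :=
              mul_le_mul_of_nonneg_left (hd1 _) (pow_nonneg hl0 _)
          _ = lam * lam ^ n := by ring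
          _ ≤ lam * (1/2) ^ n := mul_le_mul_of_nonneg_left h2 hl0
      calc ∑' n, lam ^ (n+1) * d (n+1) ≤ ∑' n : ℕ, lam * (1/2) ^ n := by
            apply Summable.tsum_le_tsum hle _ hsum2
            exact (summable_nat_add_iff 1).mpr hsum
        _ = lam * ∑' n : ℕ, ((1:ℝ)/2) ^ n := tsum_mul_left
        _ = lam * 2 := by rw [tsum_geometric_of_lt_one (by norm_num) (by norm_num)]; norm_num
        _ = 2 * lam := by ring
    have : ∑' n, lam ^ n * d n = (lam ^ 0 * d 0) + ∑' n, lam ^ (n+1) * d (n+1) := by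
      rw [← hsplit]; simp
    rw [this]
    simp only [pow_zero, one_mul]
    linarith

variable {G : Type*} [Group G] (μ : G → ℝ)

lemma lamGreen_eq (hnn : ∀ x, 0 ≤ μ x) (hprob : ∑ᶠ x, μ x = 1)
    (hfin : (Function.support μ).Finite) {lam : ℝ} (h0 : 0 < lam) (h1 : lam < 1) (x y : G) :
    lamGreen μ lam x y
      = lam ^ (munorm μ (x⁻¹ * y)) *
        ∑' n, lam ^ n * convPow μ (n + munorm μ (x⁻¹ * y)) (x⁻¹ * y) := by
  set g := x⁻¹ * y with hg
  set b := munorm μ g with hb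
  have hsum : Summable (fun n => lam ^ n * convPow μ n g) :=
    aux_summable h0.le h1 (fun n => convPow_nonneg μ hnn n g)
      (fun n => convPow_le_one μ hnn hprob hfin n g)
  have hsplit := Summable.sum_add_tsum_nat_add b hsum
  have hzero : ∑ i ∈ Finset.range b, lam ^ i * convPow μ i g = 0 := by
    apply Finset.sum_eq_zero
    intro i hi
    rw [convPow_eq_zero_of_lt μ hnn (Finset.mem_range.mp hi), mul_zero]
  have : lamGreen μ lam x y = ∑' n, lam ^ (n + b) * convPow μ (n + b) g := by
    rw [show lamGreen μ lam x y = ∑' n, lam ^ n * convPow μ n g from rfl, ← hsplit, hzero,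
      zero_add]
  rw [this]
  calc ∑' n, lam ^ (n + b) * convPow μ (n + b) g
      = ∑' n, lam ^ b * (lam ^ n * convPow μ (n + b) g) := by
        apply tsum_congr; intro n; rw [pow_add]; ring
    _ = lam ^ b * ∑' n, lam ^ n * convPow μ (n + b) g := tsum_mul_left

end aux3


theorem rescaled_martin_kernel_tendsto_zero_kernel
    {G : Type*} [Group G] [Countable G] (μ : G → ℝ)
    (hnn : ∀ x, 0 ≤ μ x) (hprob : ∑ᶠ x, μ x = 1)
    (hfin : (Function.support μ).Finite)
    (hadm : ∀ x : G, ∃ n, 0 < convPow μ n x) (x y : G) :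
    Tendsto (fun lam : ℝ =>
        lam ^ (munorm μ x) * (lamGreen μ lam x y / lamGreen μ lam 1 y))
      (nhdsWithin 0 (Set.Ioi 0))
      (nhds (if munorm μ y = munorm μ x + munorm μ (x⁻¹ * y) then
          convPow μ (munorm μ y - munorm μ x) (x⁻¹ * y) / convPow μ (munorm μ y) y
        else 0)) := by
  set a := munorm μ x with ha
  set g := x⁻¹ * y with hg
  set b := munorm μ g with hb
  set c := munorm μ y with hc
  have hcab : c ≤ a + b := munorm_le_add μ hnn hfin hadm x y
  set k := a + b - c with hk
  set Fg : ℝ → ℝ := fun lam => ∑' n, lam ^ n * convPow μ (n + b) g with hFg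
  set Fy : ℝ → ℝ := fun lam => ∑' n, lam ^ n * convPow μ (n + c) y with hFy
  -- limits of Fg and Fy
  have hFgT : Tendsto Fg (nhdsWithin 0 (Set.Ioi 0)) (nhds (convPow μ b g)) := by
    have := aux_tendsto (d := fun n => convPow μ (n + b) g)
      (fun n => convPow_nonneg μ hnn _ _) (fun n => convPow_le_one μ hnn hprob hfin _ _)
    simpa using this
  have hFyT : Tendsto Fy (nhdsWithin 0 (Set.Ioi 0)) (nhds (convPow μ c y)) := by
    have := aux_tendsto (d := fun n => convPow μ (n + c) y)
      (fun n => convPow_nonneg μ hnn _ _) (fun n => convPow_le_one μ hnn hprob hfin _ _)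
    simpa using this
  have hbpos : 0 < convPow μ b g := convPow_munorm_pos μ hadm g
  have hcpos : 0 < convPow μ c y := convPow_munorm_pos μ hadm y
  -- eventual equality
  have hmem : Set.Ioo (0:ℝ) 1 ∈ nhdsWithin (0:ℝ) (Set.Ioi 0) :=
    Ioo_mem_nhdsGT_of_mem (by norm_num)
  have heq : (fun lam : ℝ => lam ^ a * (lamGreen μ lam x y / lamGreen μ lam 1 y))
      =ᶠ[nhdsWithin 0 (Set.Ioi 0)] fun lam => lam ^ k * (Fg lam / Fy lam) := by
    filter_upwards [hmem] with lam hlam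
    have hl0 : 0 < lam := hlam.1
    have hl1 : lam < 1 := hlam.2
    have e1 : lamGreen μ lam x y = lam ^ b * Fg lam :=
      lamGreen_eq μ hnn hprob hfin hl0 hl1 x y
    have e2 : lamGreen μ lam 1 y = lam ^ c * Fy lam := by
      have := lamGreen_eq μ hnn hprob hfin hl0 hl1 1 y
      simpa [hc, hFy] using this
    rw [e1, e2]
    have hcne : lam ^ c ≠ 0 := pow_ne_zero _ (ne_of_gt hl0)
    have hpow : lam ^ a * lam ^ b = lam ^ k * lam ^ c := by
      rw [← pow_add, ← pow_add]
      congr 1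
      omega
    calc lam ^ a * (lam ^ b * Fg lam / (lam ^ c * Fy lam))
        = (lam ^ a * lam ^ b) * Fg lam / (lam ^ c * Fy lam) := by ring
      _ = (lam ^ k * lam ^ c) * Fg lam / (lam ^ c * Fy lam) := by rw [hpow]
      _ = lam ^ c * (lam ^ k * Fg lam) / (lam ^ c * Fy lam) := by ring
      _ = lam ^ k * Fg lam / Fy lam := mul_div_mul_left _ _ hcne
      _ = lam ^ k * (Fg lam / Fy lam) := mul_div_assoc _ _ _
  -- limit of lam ^ k
  have hT1 : Tendsto (fun lam : ℝ => lam ^ k) (nhdsWithin 0 (Set.Ioi 0))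
      (nhds (if c = a + b then 1 else 0)) := by
    by_cases hcond : c = a + b
    · have hk0 : k = 0 := by omega
      simp only [hcond, if_pos rfl, hk0, pow_zero]
      exact tendsto_const_nhds
    · have hkpos : 0 < k := by omega
      simp only [if_neg hcond]
      have : Tendsto (fun lam : ℝ => lam ^ k) (nhds 0) (nhds ((0:ℝ) ^ k)) :=
        (continuous_pow k).tendsto 0
      rw [zero_pow (by omega : k ≠ 0)] at this
      exact this.mono_left nhdsWithin_le_nhds
  have hT2 : Tendsto (fun lam : ℝ => Fg lam / Fy lam) (nhdsWithin 0 (Set.Ioi 0))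
      (nhds (convPow μ b g / convPow μ c y)) :=
    hFgT.div hFyT (ne_of_gt hcpos)
  have hT := hT1.mul hT2
  apply Tendsto.congr' heq.symm
  convert hT using 2
  by_cases hcond : c = a + b
  · have hba : b = c - a := by omega
    simp [hcond, ← hba]
  · simp [hcond]
end

section
/- For the group Γ = F_2 × ℤ/2ℤ with the lazy measure μ = α δ_{(e,0)} + ((1−α)/6)(δ_{(a,0)} + δ_{(a^{-1},0)} + δ_{(b,0)} + δ_{(b^{-1},0)} + δ_{(a,1)} + δ_{(a^{-1},1)}), 0 < α < 1: for every n ≥ 0 there is a unique word geodesic (with respect to the generating set S = supp(μ)\{(e,0)}) from (e,0) to (ab^n, 0), a unique geodesic from (e,0) to (ab^n, 1), and exactly two geodesics from (e,0) to (ab^n a, 1); in particular |(ab^n,0)|_μ = |(ab^n,1)|_μ = n+1 and |(ab^n a,1)|_μ = n+2. -/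
open scoped Classical

/-- The group Γ = F₂ × ℤ/2ℤ. -/
abbrev Gamma2 : Type := FreeGroup (Fin 2) × Multiplicative (ZMod 2)

def ga : FreeGroup (Fin 2) := FreeGroup.of 0
def gb : FreeGroup (Fin 2) := FreeGroup.of 1
def z0 : Multiplicative (ZMod 2) := Multiplicative.ofAdd 0
def z1 : Multiplicative (ZMod 2) := Multiplicative.ofAdd 1

/-- The generating set `S = {(a,0),(b,0),(a⁻¹,0),(b⁻¹,0),(a,1),(a⁻¹,1)}`. -/
def Sgen : Set Gamma2 :=
  {(ga, z0), (gb, z0), (ga⁻¹, z0), (gb⁻¹, z0), (ga, z1), (ga⁻¹, z1)}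

/-- Word length with respect to the generating set `S`. -/
noncomputable def wl (x : Gamma2) : ℕ :=
  sInf {n | ∃ l : List Gamma2, l.length = n ∧ (∀ s ∈ l, s ∈ Sgen) ∧ l.prod = x}

/-- A geodesic word from the identity to `v`: a word in the generators of minimal
length representing `v`. -/
def IsGeodesicWord (v : Gamma2) (l : List Gamma2) : Prop :=
  (∀ s ∈ l, s ∈ Sgen) ∧ l.prod = v ∧ l.length = wl v

namespace G2Aux

abbrev Letter := Fin 2 × Bool

def letter (p : Letter) : FreeGroup (Fin 2) := cond p.2 (FreeGroup.of p.1) (FreeGroup.of p.1)⁻¹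

lemma letter_eq_mk (p : Letter) : letter p = FreeGroup.mk [p] := by
  obtain ⟨i, b⟩ := p
  cases b
  · show (FreeGroup.of i)⁻¹ = _
    rw [show FreeGroup.of i = FreeGroup.mk [(i, true)] from rfl, FreeGroup.inv_mk]
    rfl
  · rfl

lemma prod_letter (L : List Letter) : (L.map letter).prod = FreeGroup.mk L := by
  induction L with
  | nil => simp [FreeGroup.one_eq_mk]
  | cons p t ih => rw [List.map_cons, List.prod_cons, ih, letter_eq_mk, FreeGroup.mul_mk]; rfl

lemma reduce_len (L : List Letter) : (FreeGroup.reduce L).length ≤ L.length ∧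
    ((FreeGroup.reduce L).length = L.length → FreeGroup.reduce L = L) := by
  induction L with
  | nil => simp
  | cons p t ih =>
    rcases h : FreeGroup.reduce t with _ | ⟨hd, tl⟩
    · rw [h] at ih
      have e : FreeGroup.reduce (p :: t) = [p] := by rw [FreeGroup.reduce.cons, h]
      rw [e]
      refine ⟨by simp, fun hlen => ?_⟩
      simp only [List.length_cons, List.length_nil] at hlen
      have ht : t = [] := List.length_eq_zero_iff.mp (by omega)
      subst ht; rfl
    · rw [h] at ih
      have hlt : tl.length + 1 ≤ t.length := by simpa using ih.1
      by_cases hc : p.1 = hd.1 ∧ p.2 = !hd.2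
      · have e : FreeGroup.reduce (p :: t) = tl := by
          rw [FreeGroup.reduce.cons, h]; exact if_pos hc
        rw [e]
        exact ⟨by simp; omega, fun hlen => by simp at hlen; omega⟩
      · have e : FreeGroup.reduce (p :: t) = p :: hd :: tl := by
          rw [FreeGroup.reduce.cons, h]; exact if_neg hc
        rw [e]
        refine ⟨by simp; omega, fun hlen => ?_⟩
        simp only [List.length_cons] at hlen
        have h2 : hd :: tl = t := ih.2 (by simp; omega)
        rw [h2]

/-! ### The concrete reduced words -/

def W0 (n : ℕ) : List Letter := ((0 : Fin 2), true) :: List.replicate n ((1 : Fin 2), true)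

def Wa (n : ℕ) : List Letter :=
  ((0 : Fin 2), true) :: (List.replicate n ((1 : Fin 2), true) ++ [((0 : Fin 2), true)])

lemma red_W0 (n : ℕ) : FreeGroup.reduce (W0 n) = W0 n := by
  rw [W0, FreeGroup.reduce.cons, FreeGroup.reduce_replicate]
  cases n with
  | zero => rfl
  | succ m =>
    rw [List.replicate_succ]
    exact if_neg (by decide)

lemma red_aux (n : ℕ) :
    FreeGroup.reduce (List.replicate n ((1 : Fin 2), true) ++ [((0 : Fin 2), true)]) =
      List.replicate n ((1 : Fin 2), true) ++ [((0 : Fin 2), true)] := by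
  induction n with
  | zero => rfl
  | succ m ih =>
    rw [List.replicate_succ, List.cons_append, FreeGroup.reduce.cons, ih]
    cases m with
    | zero => exact if_neg (by decide)
    | succ k =>
      rw [List.replicate_succ, List.cons_append]
      exact if_neg (by decide)

lemma red_Wa (n : ℕ) : FreeGroup.reduce (Wa n) = Wa n := by
  rw [Wa, FreeGroup.reduce.cons, red_aux]
  cases n with
  | zero => exact if_neg (by decide)
  | succ m =>
    rw [List.replicate_succ, List.cons_append]
    exact if_neg (by decide)

lemma map_letter_W0 (n : ℕ) : (W0 n).map letter = ga :: List.replicate n gb := by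
  rw [W0, List.map_cons, List.map_replicate]; rfl

lemma map_letter_Wa (n : ℕ) :
    (Wa n).map letter = ga :: (List.replicate n gb ++ [ga]) := by
  rw [Wa, List.map_cons, List.map_append, List.map_replicate]; rfl

lemma prod_W0 (n : ℕ) : ga * gb ^ n = FreeGroup.mk (W0 n) := by
  rw [← prod_letter, map_letter_W0, List.prod_cons, List.prod_replicate]

lemma prod_Wa (n : ℕ) : ga * gb ^ n * ga = FreeGroup.mk (Wa n) := by
  rw [← prod_letter, map_letter_Wa, List.prod_cons, List.prod_append, List.prod_replicate,
    List.prod_singleton, mul_assoc]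

lemma toWord_W0 (n : ℕ) : (ga * gb ^ n).toWord = W0 n := by
  rw [prod_W0, FreeGroup.toWord_mk, red_W0]

lemma toWord_Wa (n : ℕ) : (ga * gb ^ n * ga).toWord = Wa n := by
  rw [prod_Wa, FreeGroup.toWord_mk, red_Wa]

lemma len_W0 (n : ℕ) : (W0 n).length = n + 1 := by simp [W0]

lemma len_Wa (n : ℕ) : (Wa n).length = n + 2 := by simp [Wa]

/-! ### Distinguishing the generators -/

lemma tw_ga : ga.toWord = [((0 : Fin 2), true)] := FreeGroup.toWord_of 0
lemma tw_gb : gb.toWord = [((1 : Fin 2), true)] := FreeGroup.toWord_of 1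

lemma tw_gainv : (ga⁻¹).toWord = [((0 : Fin 2), false)] := by
  rw [show ga⁻¹ = FreeGroup.mk [((0 : Fin 2), false)] by
    rw [show ga = FreeGroup.mk [((0 : Fin 2), true)] from rfl, FreeGroup.inv_mk]; rfl,
    FreeGroup.toWord_mk]
  rfl

lemma tw_gbinv : (gb⁻¹).toWord = [((1 : Fin 2), false)] := by
  rw [show gb⁻¹ = FreeGroup.mk [((1 : Fin 2), false)] by
    rw [show gb = FreeGroup.mk [((1 : Fin 2), true)] from rfl, FreeGroup.inv_mk]; rfl,
    FreeGroup.toWord_mk]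
  rfl

lemma ga_ne_gb : ga ≠ gb := fun h => by
  have := congrArg FreeGroup.toWord h; rw [tw_ga, tw_gb] at this; exact absurd this (by decide)

lemma gainv_ne_gb : ga⁻¹ ≠ gb := fun h => by
  have := congrArg FreeGroup.toWord h; rw [tw_gainv, tw_gb] at this; exact absurd this (by decide)

lemma gbinv_ne_gb : gb⁻¹ ≠ gb := fun h => by
  have := congrArg FreeGroup.toWord h; rw [tw_gbinv, tw_gb] at this; exact absurd this (by decide)

lemma mem_Sgen_iff (s : Gamma2) :
    s ∈ Sgen ↔ s = (ga, z0) ∨ s = (gb, z0) ∨ s = (ga⁻¹, z0) ∨ s = (gb⁻¹, z0) ∨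
      s = (ga, z1) ∨ s = (ga⁻¹, z1) := by
  simp [Sgen, Set.mem_insert_iff, Set.mem_singleton_iff]

lemma sgen_fst_gb {y : Gamma2} (hy : y ∈ Sgen) (h1 : y.1 = gb) : y = (gb, z0) := by
  rcases (mem_Sgen_iff y).mp hy with rfl | rfl | rfl | rfl | rfl | rfl
  · exact absurd h1 ga_ne_gb
  · rfl
  · exact absurd h1 gainv_ne_gb
  · exact absurd h1 gbinv_ne_gb
  · exact absurd h1 ga_ne_gb
  · exact absurd h1 gainv_ne_gb

/-! ### Letters of generator words -/

lemma exists_letters (l : List Gamma2) (h : ∀ s ∈ l, s ∈ Sgen) :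
    ∃ D : List Letter, D.map letter = l.map Prod.fst ∧ D.length = l.length := by
  induction l with
  | nil => exact ⟨[], rfl, rfl⟩
  | cons s t ih =>
    obtain ⟨D, hD1, hD2⟩ := ih (fun x hx => h x (List.mem_cons_of_mem _ hx))
    have hs := h s List.mem_cons_self
    have hp : ∃ p : Letter, letter p = s.1 := by
      rcases (mem_Sgen_iff s).mp hs with rfl | rfl | rfl | rfl | rfl | rfl
      · exact ⟨((0 : Fin 2), true), rfl⟩
      · exact ⟨((1 : Fin 2), true), rfl⟩
      · exact ⟨((0 : Fin 2), false), rfl⟩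
      · exact ⟨((1 : Fin 2), false), rfl⟩
      · exact ⟨((0 : Fin 2), true), rfl⟩
      · exact ⟨((0 : Fin 2), false), rfl⟩
    obtain ⟨p, hp⟩ := hp
    exact ⟨p :: D, by rw [List.map_cons, List.map_cons, hp, hD1], by simp [hD2]⟩

lemma fst_prod (l : List Gamma2) : (l.map Prod.fst).prod = l.prod.1 :=
  l.prod_hom (MonoidHom.fst _ _)

lemma snd_prod (l : List Gamma2) : (l.map Prod.snd).prod = l.prod.2 :=
  l.prod_hom (MonoidHom.snd _ _)

lemma lower_bound (l : List Gamma2) (h : ∀ s ∈ l, s ∈ Sgen) :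
    (l.prod.1).toWord.length ≤ l.length := by
  obtain ⟨D, hD1, hD2⟩ := exists_letters l h
  have : l.prod.1 = FreeGroup.mk D := by
    rw [← fst_prod, ← hD1, prod_letter]
  rw [this, FreeGroup.toWord_mk, ← hD2]
  exact (reduce_len D).1

lemma forced (l : List Gamma2) (h : ∀ s ∈ l, s ∈ Sgen) (W : List Letter)
    (hp1 : l.prod.1 = FreeGroup.mk W) (hred : FreeGroup.reduce W = W)
    (hlen : l.length = W.length) : l.map Prod.fst = W.map letter := by
  obtain ⟨D, hD1, hD2⟩ := exists_letters l h
  have hmk : FreeGroup.mk D = FreeGroup.mk W := by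
    rw [← prod_letter, hD1, fst_prod, hp1]
  have hr : FreeGroup.reduce D = W := by
    rw [FreeGroup.reduce.sound hmk, hred]
  have hDW : D = W := by
    have := (reduce_len D).2 (by rw [hr, ← hlen, hD2])
    rw [← this, hr]
  rw [← hD1, hDW]

lemma wl_eq (x : Gamma2) (m : ℕ) (l0 : List Gamma2) (h0S : ∀ s ∈ l0, s ∈ Sgen)
    (h0p : l0.prod = x) (h0len : l0.length = m)
    (hlb : ∀ l : List Gamma2, (∀ s ∈ l, s ∈ Sgen) → l.prod = x → m ≤ l.length) :
    wl x = m := by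
  refine le_antisymm (Nat.sInf_le ⟨l0, h0len, h0S, h0p⟩) (le_csInf ⟨m, l0, h0len, h0S, h0p⟩ ?_)
  rintro k ⟨l, hk, hS, hp⟩
  rw [← hk]
  exact hlb l hS hp

/-! ### ZMod 2 facts -/

lemma z0_eq_one : z0 = 1 := rfl
lemma zcases (s : Multiplicative (ZMod 2)) : s = z0 ∨ s = z1 := by revert s; decide
lemma z0_ne_z1 : z0 ≠ z1 := by decide
lemma z1_mul_z1 : z1 * z1 = z0 := by decide

/-! ### Canonical geodesic words -/

def L0 (n : ℕ) (s : Multiplicative (ZMod 2)) : List Gamma2 :=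
  (ga, s) :: List.replicate n (gb, z0)

def La (n : ℕ) (s t : Multiplicative (ZMod 2)) : List Gamma2 :=
  (ga, s) :: (List.replicate n (gb, z0) ++ [(ga, t)])

lemma mem_L0 (n : ℕ) (s : Multiplicative (ZMod 2)) : ∀ x ∈ L0 n s, x ∈ Sgen := by
  intro x hx
  rw [L0, List.mem_cons] at hx
  rcases hx with rfl | hx
  · rcases zcases s with rfl | rfl
    · exact Or.inl rfl
    · rw [mem_Sgen_iff]; tauto
  · rw [List.eq_of_mem_replicate hx, mem_Sgen_iff]; tauto

lemma mem_La (n : ℕ) (s t : Multiplicative (ZMod 2)) : ∀ x ∈ La n s t, x ∈ Sgen := by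
  intro x hx
  rw [La, List.mem_cons, List.mem_append, List.mem_singleton] at hx
  rcases hx with rfl | hx | rfl
  · rcases zcases s with rfl | rfl <;> · rw [mem_Sgen_iff]; tauto
  · rw [List.eq_of_mem_replicate hx, mem_Sgen_iff]; tauto
  · rcases zcases t with rfl | rfl <;> · rw [mem_Sgen_iff]; tauto

lemma prod_eq (l : List Gamma2) : l.prod = ((l.map Prod.fst).prod, (l.map Prod.snd).prod) := by
  rw [fst_prod, snd_prod]

lemma map_fst_L0 (n : ℕ) (s : Multiplicative (ZMod 2)) :
    (L0 n s).map Prod.fst = ga :: List.replicate n gb := by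
  rw [L0, List.map_cons, List.map_replicate]

lemma map_fst_La (n : ℕ) (s t : Multiplicative (ZMod 2)) :
    (La n s t).map Prod.fst = ga :: (List.replicate n gb ++ [ga]) := by
  rw [La, List.map_cons, List.map_append, List.map_replicate]; rfl

lemma prod_L0 (n : ℕ) (s : Multiplicative (ZMod 2)) : (L0 n s).prod = (ga * gb ^ n, s) := by
  rw [prod_eq, map_fst_L0]
  congr 1
  · rw [List.prod_cons, List.prod_replicate]
  · rw [L0, List.map_cons, List.map_replicate, List.prod_cons, List.prod_replicate,
      z0_eq_one, one_pow, mul_one]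

lemma prod_La (n : ℕ) (s t : Multiplicative (ZMod 2)) :
    (La n s t).prod = (ga * gb ^ n * ga, s * t) := by
  rw [prod_eq, map_fst_La]
  congr 1
  · rw [List.prod_cons, List.prod_append, List.prod_replicate, List.prod_singleton, mul_assoc]
  · simp [La, z0_eq_one]

lemma len_L0 (n : ℕ) (s : Multiplicative (ZMod 2)) : (L0 n s).length = n + 1 := by simp [L0]

lemma len_La (n : ℕ) (s t : Multiplicative (ZMod 2)) : (La n s t).length = n + 2 := by
  simp [La]

/-! ### Reconstruction -/

lemma reconstruct0 (n : ℕ) (z : Multiplicative (ZMod 2)) (l : List Gamma2)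
    (hS : ∀ s ∈ l, s ∈ Sgen) (hp : l.prod = (ga * gb ^ n, z))
    (hf : l.map Prod.fst = ga :: List.replicate n gb) : l = L0 n z := by
  cases l with
  | nil => simp at hf
  | cons x t =>
    rw [List.map_cons, List.cons.injEq] at hf
    obtain ⟨hx1, ht⟩ := hf
    have htrep : t = List.replicate n (gb, z0) := by
      rw [List.eq_replicate_iff]
      constructor
      · have := congrArg List.length ht; simpa using this
      · intro y hy
        have hy1 : y.1 = gb := by
          have : y.1 ∈ t.map Prod.fst := List.mem_map_of_mem hy
          rw [ht] at this
          exact List.eq_of_mem_replicate this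
        exact sgen_fst_gb (hS y (List.mem_cons_of_mem _ hy)) hy1
    have hx2 : x.2 = z := by
      have := congrArg Prod.snd hp
      rw [prod_eq] at this
      simp only [List.map_cons, List.prod_cons, htrep, List.map_replicate,
        List.prod_replicate] at this
      rw [z0_eq_one, one_pow, mul_one] at this
      exact this
    rw [htrep, L0, show x = (ga, z) from Prod.ext hx1 hx2]

lemma reconstructa (n : ℕ) (z : Multiplicative (ZMod 2)) (l : List Gamma2)
    (hS : ∀ s ∈ l, s ∈ Sgen) (hp : l.prod = (ga * gb ^ n * ga, z))
    (hf : l.map Prod.fst = ga :: (List.replicate n gb ++ [ga])) :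
    ∃ s t, s * t = z ∧ l = La n s t := by
  cases l with
  | nil => simp at hf
  | cons x t =>
    rw [List.map_cons, List.cons.injEq] at hf
    obtain ⟨hx1, ht⟩ := hf
    rcases t.eq_nil_or_concat with rfl | ⟨t', y, rfl⟩
    · exfalso
      have := congrArg List.length ht; simp at this
    · rw [List.concat_eq_append] at hS hp ht ⊢
      rw [List.map_append, List.map_singleton] at ht
      have hlen : (t'.map Prod.fst).length = (List.replicate n gb).length := by
        have := congrArg List.length ht; simpa using this
      obtain ⟨ht', hy⟩ := List.append_inj ht hlen
      rw [List.singleton_inj] at hy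
      have ht'rep : t' = List.replicate n (gb, z0) := by
        rw [List.eq_replicate_iff]
        constructor
        · have := congrArg List.length ht'; simpa using this
        · intro w hw
          have hw1 : w.1 = gb := by
            have : w.1 ∈ t'.map Prod.fst := List.mem_map_of_mem hw
            rw [ht'] at this
            exact List.eq_of_mem_replicate this
          exact sgen_fst_gb
            (hS w (List.mem_cons_of_mem _ (List.mem_append_left _ hw))) hw1
      have hsnd : x.2 * y.2 = z := by
        have h2 := congrArg Prod.snd hp
        rw [prod_eq] at h2
        simp only [ht'rep] at h2
        simpa [z0_eq_one] using h2
      refine ⟨x.2, y.2, hsnd, ?_⟩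
      rw [ht'rep, La, show x = (ga, x.2) from Prod.ext hx1 rfl,
        show y = (ga, y.2) from Prod.ext hy rfl]

end G2Aux

open G2Aux in
theorem geodesics_in_F2_times_Z2 :
    ∀ n : ℕ,
      (∃! l : List Gamma2, IsGeodesicWord (ga * gb ^ n, z0) l) ∧
      (∃! l : List Gamma2, IsGeodesicWord (ga * gb ^ n, z1) l) ∧
      (∃ l₁ l₂ : List Gamma2, l₁ ≠ l₂ ∧
        IsGeodesicWord (ga * gb ^ n * ga, z1) l₁ ∧
        IsGeodesicWord (ga * gb ^ n * ga, z1) l₂ ∧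
        ∀ l : List Gamma2, IsGeodesicWord (ga * gb ^ n * ga, z1) l → l = l₁ ∨ l = l₂) ∧
      wl (ga * gb ^ n, z0) = n + 1 ∧
      wl (ga * gb ^ n, z1) = n + 1 ∧
      wl (ga * gb ^ n * ga, z1) = n + 2 := by
  intro n
  -- word length computations
  have hwl0 : ∀ z : Multiplicative (ZMod 2), wl (ga * gb ^ n, z) = n + 1 := by
    intro z
    refine wl_eq _ _ (L0 n z) (mem_L0 n z) (prod_L0 n z) (len_L0 n z) ?_
    intro l hS hp
    have := lower_bound l hS
    rw [hp] at this
    simpa [toWord_W0, len_W0] using this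
  have hwla : wl (ga * gb ^ n * ga, z1) = n + 2 := by
    refine wl_eq _ _ (La n z0 z1) (mem_La n z0 z1) ?_ (len_La n z0 z1) ?_
    · rw [prod_La]; congr 1
    · intro l hS hp
      have := lower_bound l hS
      rw [hp] at this
      simpa [toWord_Wa, len_Wa] using this
  -- uniqueness for (a b^n, z)
  have huniq : ∀ z : Multiplicative (ZMod 2),
      ∃! l : List Gamma2, IsGeodesicWord (ga * gb ^ n, z) l := by
    intro z
    refine ⟨L0 n z, ⟨mem_L0 n z, prod_L0 n z, by rw [hwl0 z, len_L0]⟩, ?_⟩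
    intro l hl
    obtain ⟨hS, hp, hlen⟩ := hl
    rw [hwl0 z] at hlen
    have hfst : l.map Prod.fst = (W0 n).map letter := by
      refine forced l hS (W0 n) ?_ (red_W0 n) (by rw [hlen, len_W0])
      rw [hp]; exact prod_W0 n
    rw [map_letter_W0] at hfst
    exact reconstruct0 n z l hS hp hfst
  -- the two geodesics to (a b^n a, 1)
  have hgeo : ∀ s t : Multiplicative (ZMod 2), s * t = z1 →
      IsGeodesicWord (ga * gb ^ n * ga, z1) (La n s t) := by
    intro s t hst
    exact ⟨mem_La n s t, by rw [prod_La, hst], by rw [hwla, len_La]⟩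
  have hclass : ∀ l : List Gamma2, IsGeodesicWord (ga * gb ^ n * ga, z1) l →
      l = La n z0 z1 ∨ l = La n z1 z0 := by
    intro l hl
    obtain ⟨hS, hp, hlen⟩ := hl
    rw [hwla] at hlen
    have hfst : l.map Prod.fst = (Wa n).map letter := by
      refine forced l hS (Wa n) ?_ (red_Wa n) (by rw [hlen, len_Wa])
      rw [hp]; exact prod_Wa n
    rw [map_letter_Wa] at hfst
    obtain ⟨s, t, hst, rfl⟩ := reconstructa n z1 l hS hp hfst
    rcases zcases s with rfl | rfl
    · left
      have : t = z1 := by rw [z0_eq_one, one_mul] at hst; exact hst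
      rw [this]
    · right
      have : t = z0 := by
        rcases zcases t with h | h
        · exact h
        · rw [h, z1_mul_z1] at hst; exact absurd hst z0_ne_z1
      rw [this]
  refine ⟨huniq z0, huniq z1, ⟨La n z0 z1, La n z1 z0, ?_, hgeo z0 z1 (by decide),
    hgeo z1 z0 (by decide), hclass⟩, hwl0 z0, hwl0 z1, hwla⟩
  intro h
  have := congrArg List.head? h
  simp [La] at this
  exact z0_ne_z1 this
end

section
/- In the group Γ = F_2 × ℤ/2ℤ with μ as above, the three functions h_0, h_1, h_2 : Γ → ℝ≥0 defined by: h_0(x) = ((1−α)/6)^{−|x|} if x ∈ H_0 := {(e,0)} ∪ {(ab^n,0) : n ≥ 0} and 0 otherwise; h_1(x) = ((1−α)/6)^{−|x|} if x ∈ H_1 := {(e,0)} ∪ {(ab^n,1) : n ≥ 0} and 0 otherwise; and h_2 = (h_0 + h_1)/2; are each ∞-harmonic and normalized, and h_2 is not a minimal ∞-harmonic function. -/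
open scoped Classical

/-- The measure `μ = α δ_{(e,0)} + ((1-α)/6) Σ_{s ∈ S} δ_s`. -/
noncomputable def mu2 (α : ℝ) (x : Gamma2) : ℝ :=
  α * (if x = 1 then 1 else 0) + ((1 - α) / 6) * (if x ∈ Sgen then 1 else 0)

/-- The truncated kernel `μ̄_x(y)` built from the word norm. -/
noncomputable def truncKernel2 (α : ℝ) (x y : Gamma2) : ℝ :=
  if wl y = wl x + 1 then mu2 α (x⁻¹ * y) else 0

/-- ∞-harmonicity with respect to the truncated kernels. -/
def InfHarmonic2 (α : ℝ) (h : Gamma2 → ℝ) : Prop :=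
  ∀ x : Gamma2, h x = ∑ᶠ y : Gamma2, truncKernel2 α x y * h y

/-- A normalized ∞-harmonic `h` is minimal if every normalized non-negative
∞-harmonic `g` with `g ≤ C·h` for some `C > 0` equals `c·h` for some `c > 0`. -/
def MinimalInfHarmonic2 (α : ℝ) (h : Gamma2 → ℝ) : Prop :=
  ∀ g : Gamma2 → ℝ, (∀ x, 0 ≤ g x) → g 1 = 1 → InfHarmonic2 α g →
    (∃ C > 0, ∀ x, g x ≤ C * h x) → ∃ c > 0, ∀ x, g x = c * h x

/-- The set `H₀ = {(e,0)} ∪ {(ab^n, 0) : n ≥ 0}`. -/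
def H0set : Set Gamma2 := {x | x = 1 ∨ ∃ n : ℕ, x = (ga * gb ^ n, z0)}

/-- The set `H₁ = {(e,0)} ∪ {(ab^n, 1) : n ≥ 0}`. -/
def H1set : Set Gamma2 := {x | x = 1 ∨ ∃ n : ℕ, x = (ga * gb ^ n, z1)}

noncomputable def h0fun (α : ℝ) (x : Gamma2) : ℝ :=
  if x ∈ H0set then (((1 - α) / 6)⁻¹) ^ (wl x) else 0

noncomputable def h1fun (α : ℝ) (x : Gamma2) : ℝ :=
  if x ∈ H1set then (((1 - α) / 6)⁻¹) ^ (wl x) else 0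

noncomputable def h2fun (α : ℝ) (x : Gamma2) : ℝ := (h0fun α x + h1fun α x) / 2

section Aux

/-- counting occurrences of the first generator -/
def cntA : FreeGroup (Fin 2) →* Multiplicative ℤ :=
  FreeGroup.lift fun j => Multiplicative.ofAdd (if j = 0 then 1 else 0)

/-- counting occurrences of the second generator -/
def cntB : FreeGroup (Fin 2) →* Multiplicative ℤ :=
  FreeGroup.lift fun j => Multiplicative.ofAdd (if j = 1 then 1 else 0)

abbrev Rred : (Fin 2 × Bool) → (Fin 2 × Bool) → Prop := fun p q => ¬(p.1 = q.1 ∧ p.2 = !q.2)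

lemma reduce_eq_self : ∀ (L : List (Fin 2 × Bool)), L.Chain' Rred → FreeGroup.reduce L = L := by
  intro L
  induction L with
  | nil => intro _; rfl
  | cons x L ih =>
    intro h
    rw [FreeGroup.reduce.cons, ih h.tail]
    cases L with
    | nil => rfl
    | cons hd tl =>
      have hR : Rred x hd := (List.isChain_cons_cons.mp h).1
      simp only [List.casesOn]
      rw [if_neg (by exact fun hc => hR ⟨hc.1, hc.2⟩)]

lemma norm_mk_of_chain' (L : List (Fin 2 × Bool)) (h : L.Chain' Rred) :
    FreeGroup.norm (FreeGroup.mk L) = L.length := by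
  rw [FreeGroup.norm, FreeGroup.toWord_mk, reduce_eq_self L h]

lemma word_abn (n : ℕ) : ga * gb ^ n = FreeGroup.mk ((0,true) :: List.replicate n (1,true)) := by
  have hp : gb ^ n = FreeGroup.mk (List.replicate n (1,true)) := by
    rw [gb, ← FreeGroup.toWord_of_pow, FreeGroup.mk_toWord]
  rw [ga, hp, FreeGroup.of, FreeGroup.mul_mk]
  rfl

lemma word_abn_a (n : ℕ) (ε : Bool) :
    ga * gb ^ n * (if ε then ga else ga⁻¹) =
      FreeGroup.mk ((0,true) :: (List.replicate n (1,true) ++ [(0,ε)])) := by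
  have hp : gb ^ n = FreeGroup.mk (List.replicate n (1,true)) := by
    rw [gb, ← FreeGroup.toWord_of_pow, FreeGroup.mk_toWord]
  cases ε <;>
  · rw [ga, hp, FreeGroup.of]
    simp [FreeGroup.inv_mk, FreeGroup.mul_mk, FreeGroup.invRev]

lemma chain'_rep_append (n : ℕ) (x y : Fin 2 × Bool) (hxx : Rred x x) (hxy : Rred x y) :
    List.Chain' Rred (List.replicate n x ++ [y]) := by
  induction n with
  | zero => simp [List.Chain']
  | succ n ih =>
    rw [List.replicate_succ, List.cons_append, List.Chain', List.isChain_cons]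
    refine ⟨?_, ih⟩
    intro z hz
    cases n with
    | zero => simp at hz; subst hz; exact hxy
    | succ n => simp [List.replicate_succ] at hz; subst hz; exact hxx

lemma chain'_rep (n : ℕ) (x : Fin 2 × Bool) (hxx : Rred x x) :
    List.Chain' Rred (List.replicate n x) := by
  induction n with
  | zero => simp [List.Chain']
  | succ n ih =>
    rw [List.replicate_succ, List.Chain', List.isChain_cons]
    refine ⟨?_, ih⟩
    intro z hz
    cases n with
    | zero => simp at hz
    | succ n => simp [List.replicate_succ] at hz; subst hz; exact hxx

lemma norm_abn (n : ℕ) : FreeGroup.norm (ga * gb ^ n) = n + 1 := by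
  rw [word_abn, norm_mk_of_chain']
  · simp
  · rw [List.Chain', List.isChain_cons]
    refine ⟨?_, chain'_rep n _ (by simp [Rred])⟩
    intro z hz
    cases n with
    | zero => simp at hz
    | succ n => simp [List.replicate_succ] at hz; subst hz; simp [Rred]

lemma norm_abna (n : ℕ) (ε : Bool) (h : n ≠ 0 ∨ ε = true) :
    FreeGroup.norm (ga * gb ^ n * (if ε then ga else ga⁻¹)) = n + 2 := by
  rw [word_abn_a, norm_mk_of_chain']
  · simp
  · rw [List.Chain', List.isChain_cons]
    refine ⟨?_, chain'_rep_append n _ _ (by simp [Rred]) (by simp [Rred])⟩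
    intro z hz
    cases n with
    | zero =>
      simp at hz; subst hz
      rcases h with h | h
      · omega
      · subst h; simp [Rred]
    | succ n => simp [List.replicate_succ] at hz; subst hz; simp [Rred]

lemma norm_abna_pos (n : ℕ) : FreeGroup.norm (ga * gb ^ n * ga) = n + 2 := by
  have := norm_abna n true (Or.inr rfl)
  simpa using this

lemma norm_abna_neg (n : ℕ) (hn : n ≠ 0) : FreeGroup.norm (ga * gb ^ n * ga⁻¹) = n + 2 := by
  have := norm_abna n false (Or.inl hn)
  simpa using this

lemma pureEqOf (i : Fin 2) : (pure i : FreeGroup (Fin 2)) = FreeGroup.of i := rfl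

lemma exists_rep (x : Gamma2) :
    ∃ l : List Gamma2, (∀ s ∈ l, s ∈ Sgen) ∧ l.prod = x := by
  obtain ⟨w, z⟩ := x
  have key : ∀ w : FreeGroup (Fin 2), ∀ z, ∃ l : List Gamma2,
      (∀ s ∈ l, s ∈ Sgen) ∧ l.prod = (w, z) := by
    intro w
    induction w using FreeGroup.induction_on with
    | C1 =>
      intro z
      have hz : z = z0 ∨ z = z1 := by revert z; decide
      rcases hz with rfl | rfl
      · exact ⟨[], by simp, by simp [Prod.ext_iff]; decide⟩
      · exact ⟨[(ga, z1), (ga⁻¹, z0)], by simp [Sgen], by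
          simp [Prod.ext_iff]; decide⟩
    | of i =>
      intro z
      have hz : z = z0 ∨ z = z1 := by revert z; decide
      have hi : i = 0 ∨ i = 1 := by omega
      rcases hi with rfl | rfl <;> rcases hz with rfl | rfl
      · exact ⟨[(ga, z0)], by simp [Sgen], by simp [ga, pureEqOf]⟩
      · exact ⟨[(ga, z1)], by simp [Sgen], by simp [ga, pureEqOf]⟩
      · exact ⟨[(gb, z0)], by simp [Sgen], by simp [gb, pureEqOf]⟩
      · exact ⟨[(gb, z0), (ga, z1), (ga⁻¹, z0)], by simp [Sgen], by
          simp [gb, pureEqOf, Prod.ext_iff]; decide⟩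
    | inv_of i _ =>
      intro z
      have hz : z = z0 ∨ z = z1 := by revert z; decide
      have hi : i = 0 ∨ i = 1 := by omega
      rcases hi with rfl | rfl <;> rcases hz with rfl | rfl
      · exact ⟨[(ga⁻¹, z0)], by simp [Sgen], by simp [ga, pureEqOf]⟩
      · exact ⟨[(ga⁻¹, z1)], by simp [Sgen], by simp [ga, pureEqOf]⟩
      · exact ⟨[(gb⁻¹, z0)], by simp [Sgen], by simp [gb, pureEqOf]⟩
      · exact ⟨[(gb⁻¹, z0), (ga, z1), (ga⁻¹, z0)], by simp [Sgen], by
          simp [gb, pureEqOf, Prod.ext_iff]; decide⟩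
    | mul x y ihx ihy =>
      intro z
      obtain ⟨lx, hlx, hpx⟩ := ihx z
      obtain ⟨ly, hly, hpy⟩ := ihy z0
      refine ⟨lx ++ ly, ?_, ?_⟩
      · intro s hs; rcases List.mem_append.mp hs with h | h
        exacts [hlx s h, hly s h]
      · rw [List.prod_append, hpx, hpy, Prod.mk_mul_mk]
        simp [Prod.ext_iff]; decide
  exact key w z

lemma wl_mem (x : Gamma2) : ∃ l : List Gamma2,
    l.length = wl x ∧ (∀ s ∈ l, s ∈ Sgen) ∧ l.prod = x := by
  have hne : {n | ∃ l : List Gamma2, l.length = n ∧ (∀ s ∈ l, s ∈ Sgen) ∧ l.prod = x}.Nonempty := by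
    obtain ⟨l, h1, h2⟩ := exists_rep x
    exact ⟨l.length, l, rfl, h1, h2⟩
  exact Nat.sInf_mem hne

lemma wl_le (x : Gamma2) (l : List Gamma2) (hl : ∀ s ∈ l, s ∈ Sgen) (hp : l.prod = x) :
    wl x ≤ l.length := Nat.sInf_le ⟨l, rfl, hl, hp⟩

lemma normFstLe (l : List Gamma2) (hl : ∀ s ∈ l, s ∈ Sgen) :
    FreeGroup.norm (l.map Prod.fst).prod ≤ l.length := by
  induction l with
  | nil => simp
  | cons s l ih =>
    rw [List.map_cons, List.prod_cons, List.length_cons]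
    calc FreeGroup.norm (s.1 * (l.map Prod.fst).prod)
        ≤ FreeGroup.norm s.1 + FreeGroup.norm (l.map Prod.fst).prod := FreeGroup.norm_mul_le _ _
      _ ≤ 1 + l.length := by
          gcongr
          · have hs := hl s List.mem_cons_self
            rcases hs with h|h|h|h|h|h <;> rw [show s = _ from h] <;>
              simp [ga, gb, FreeGroup.norm_of, FreeGroup.norm_inv_eq]
          · exact ih fun t ht => hl t (List.mem_cons_of_mem s ht)
      _ = l.length + 1 := by omega

lemma norm_le_wl (x : Gamma2) : FreeGroup.norm x.1 ≤ wl x := by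
  obtain ⟨l, hlen, hl, hp⟩ := wl_mem x
  have : x.1 = (l.map Prod.fst).prod := by
    rw [← hp]
    exact (List.prod_hom l (MonoidHom.fst _ _)).symm
  rw [this, ← hlen]
  exact normFstLe l hl

lemma wl_one : wl 1 = 0 := Nat.le_zero.mp (wl_le 1 [] (by simp) (by simp))

lemma wl_eq_zero {x : Gamma2} (h : wl x = 0) : x = 1 := by
  obtain ⟨l, hlen, _, hp⟩ := wl_mem x
  rw [h, List.length_eq_zero_iff] at hlen
  rw [← hp, hlen, List.prod_nil]

lemma wl_abn (n : ℕ) {z : Multiplicative (ZMod 2)} (hz : z = z0 ∨ z = z1) :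
    wl (ga * gb ^ n, z) = n + 1 := by
  have hlow : n + 1 ≤ wl (ga * gb ^ n, z) := by
    have := norm_le_wl (ga * gb ^ n, z)
    rwa [norm_abn] at this
  have hup : wl (ga * gb ^ n, z) ≤ n + 1 := by
    have hgen : (ga, z) ∈ Sgen := by
      rcases hz with rfl | rfl
      · exact Or.inl rfl
      · exact Or.inr (Or.inr (Or.inr (Or.inr (Or.inl rfl))))
    refine le_trans (wl_le _ ((ga, z) :: List.replicate n (gb, z0)) ?_ ?_) (by simp)
    · intro s hs
      rcases List.mem_cons.mp hs with rfl | hs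
      · exact hgen
      · rw [List.eq_of_mem_replicate hs]
        exact Or.inr (Or.inl rfl)
    · rw [List.prod_cons, List.prod_replicate]
      have : (gb, z0) ^ n = ((gb : FreeGroup (Fin 2)) ^ n, z0 ^ n) := by
        rw [Prod.pow_mk]
      rw [this, Prod.mk_mul_mk]
      have hz0 : (z0 : Multiplicative (ZMod 2)) ^ n = 1 := by
        have : (z0 : Multiplicative (ZMod 2)) = 1 := by decide
        rw [this, one_pow]
      rw [hz0, mul_one]
  omega

lemma wl_ga {z : Multiplicative (ZMod 2)} (hz : z = z0 ∨ z = z1) : wl (ga, z) = 1 := by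
  have := wl_abn 0 hz
  simpa using this

end Aux

section Harmonic

variable {α : ℝ}

lemma ga_ne_one : ga ≠ 1 := by
  intro h
  have := congrArg cntA h
  simp [cntA, ga] at this

lemma gb_ne_one : gb ≠ 1 := by
  intro h
  have := congrArg cntB h
  simp [cntB, gb] at this

lemma abn_ne_one (n : ℕ) : ga * gb ^ n ≠ 1 := by
  intro h
  have := congrArg cntA h
  simp [cntA, ga, gb] at this

lemma Sgen_ne_one {s : Gamma2} (hs : s ∈ Sgen) : s ≠ 1 := by
  rcases hs with h|h|h|h|h|h <;> subst h <;>
    simp [Prod.mk_eq_one, ga_ne_one, gb_ne_one, inv_eq_one]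

lemma mu2_mem (hs : s ∈ Sgen) : mu2 α s = (1 - α) / 6 := by
  rw [mu2, if_neg (Sgen_ne_one hs), if_pos hs]
  ring

lemma mu2_eq_zero {x : Gamma2} (h1 : x ≠ 1) (h2 : x ∉ Sgen) : mu2 α x = 0 := by
  rw [mu2, if_neg h1, if_neg h2]
  ring

lemma z_comp_cases (z : Multiplicative (ZMod 2)) : z = z0 ∨ z = z1 := by revert z; decide

/-- The main generic harmonicity lemma, for membership defined by `z`. -/
lemma harmonic_main (hα1 : α < 1) (z : Multiplicative (ZMod 2))
    (hz : z = z0 ∨ z = z1) (h : Gamma2 → ℝ)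
    (hin : ∀ x : Gamma2, (x = 1 ∨ ∃ n : ℕ, x = (ga * gb ^ n, z)) →
      h x = (((1 - α) / 6)⁻¹) ^ (wl x))
    (hout : ∀ x : Gamma2, ¬(x = 1 ∨ ∃ n : ℕ, x = (ga * gb ^ n, z)) → h x = 0) :
    InfHarmonic2 α h := by
  set t : ℝ := (1 - α) / 6 with ht_def
  have ht : 0 < t := by rw [ht_def]; linarith
  have hgaz : (ga, z) ∈ Sgen := by
    rcases hz with rfl | rfl
    · exact Or.inl rfl
    · exact Or.inr (Or.inr (Or.inr (Or.inr (Or.inl rfl))))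
  intro x
  by_cases hx : x = 1 ∨ ∃ n : ℕ, x = (ga * gb ^ n, z)
  · rcases hx with rfl | ⟨n, rfl⟩
    · -- x = 1
      have hkey : ∑ᶠ y : Gamma2, truncKernel2 α 1 y * h y
          = truncKernel2 α 1 (ga, z) * h (ga, z) := by
        apply finsum_eq_single
        intro y hy
        by_cases hyH : y = 1 ∨ ∃ m : ℕ, y = (ga * gb ^ m, z)
        · rcases hyH with rfl | ⟨m, rfl⟩
          · rw [truncKernel2, if_neg (by rw [wl_one]; omega), zero_mul]
          · rcases Nat.eq_zero_or_pos m with rfl | hm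
            · exact absurd (by simp) hy
            · rw [truncKernel2, if_neg (by rw [wl_abn m hz, wl_one]; omega), zero_mul]
        · rw [hout y hyH, mul_zero]
      rw [hkey, hin 1 (Or.inl rfl), wl_one, pow_zero]
      rw [truncKernel2, if_pos (by rw [wl_ga hz, wl_one]), inv_one, one_mul,
        mu2_mem hgaz, hin (ga, z) (Or.inr ⟨0, by simp⟩), wl_ga hz, pow_one]
      rw [← ht_def]
      field_simp
    · -- x = (ab^n, z)
      have hwlx : wl (ga * gb ^ n, z) = n + 1 := wl_abn n hz
      have hwly : wl (ga * gb ^ (n + 1), z) = n + 2 := wl_abn (n + 1) hz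
      have hkey : ∑ᶠ y : Gamma2, truncKernel2 α (ga * gb ^ n, z) y * h y
          = truncKernel2 α (ga * gb ^ n, z) (ga * gb ^ (n + 1), z)
            * h (ga * gb ^ (n + 1), z) := by
        apply finsum_eq_single
        intro y hy
        by_cases hyH : y = 1 ∨ ∃ m : ℕ, y = (ga * gb ^ m, z)
        · rcases hyH with rfl | ⟨m, rfl⟩
          · rw [truncKernel2, if_neg (by rw [wl_one, hwlx]; omega), zero_mul]
          · rcases eq_or_ne m (n + 1) with rfl | hm
            · exact absurd rfl hy
            · rw [truncKernel2, if_neg (by rw [wl_abn m hz, hwlx]; omega), zero_mul]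
        · rw [hout y hyH, mul_zero]
      have hstep : ((ga * gb ^ n, z) : Gamma2)⁻¹ * (ga * gb ^ (n + 1), z) = (gb, z0) := by
        have h1 : (ga * gb ^ n)⁻¹ * (ga * gb ^ (n + 1)) = gb := by
          rw [pow_succ]; group
        have h2 : z⁻¹ * z = z0 := by
          rw [inv_mul_cancel]; decide
        rw [Prod.inv_mk, Prod.mk_mul_mk, h1, h2]
      rw [hkey, truncKernel2, if_pos (by rw [hwly, hwlx]), hstep,
        mu2_mem (by exact Or.inr (Or.inl rfl)),
        hin _ (Or.inr ⟨n, rfl⟩), hin _ (Or.inr ⟨n + 1, rfl⟩), hwlx, hwly, ← ht_def]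
      rw [inv_pow, inv_pow, eq_comm]
      rw [show n + 2 = (n + 1) + 1 by omega, pow_succ]
      field_simp
  · -- x outside the support
    rw [hout x hx]
    apply (finsum_eq_zero_of_forall_eq_zero ?_).symm
    intro y
    by_cases hyH : y = 1 ∨ ∃ m : ℕ, y = (ga * gb ^ m, z)
    · rcases hyH with rfl | ⟨m, rfl⟩
      · rw [truncKernel2, if_neg (by rw [wl_one]; omega), zero_mul]
      · by_cases hwl : wl ((ga * gb ^ m, z) : Gamma2) = wl x + 1
        · have hwlx : wl x = m := by rw [wl_abn m hz] at hwl; omega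
          have hker : mu2 α (x⁻¹ * (ga * gb ^ m, z)) = 0 := by
            apply mu2_eq_zero
            · intro hcon
              apply hx
              have : x = (ga * gb ^ m, z) := by
                have := congrArg (x * ·) hcon
                simpa [mul_inv_cancel_left] using this.symm
              exact this ▸ Or.inr ⟨m, rfl⟩
            · intro hsS
              set s := x⁻¹ * (ga * gb ^ m, z) with hs_def
              have hxy : x = ((ga * gb ^ m, z) : Gamma2) * s⁻¹ := by
                rw [hs_def]; group
              have hnorm := norm_le_wl x
              rcases hsS with hs|hs|hs|hs|hs|hs <;> rw [hs] at hxy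
              · -- s = (ga, z0) : x = (ab^m a⁻¹, z)
                rcases Nat.eq_zero_or_pos m with rfl | hm
                · exact hx (Or.inl (wl_eq_zero (by omega)))
                · have hx1 : x.1 = ga * gb ^ m * ga⁻¹ := by rw [hxy]; rfl
                  rw [hx1] at hnorm
                  have := norm_abna_neg m (by omega)
                  omega
              · -- s = (gb, z0) : x = (ab^m b⁻¹, z)
                rcases Nat.eq_zero_or_pos m with rfl | hm
                · -- x = (a b⁻¹, z) but wl x = 0 forces x = 1
                  have hx1 : x = 1 := wl_eq_zero (by omega)
                  rw [hx1] at hxy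
                  have : (1 : FreeGroup (Fin 2)) = ga * gb ^ 0 * gb⁻¹ := congrArg Prod.fst hxy
                  have h2 := congrArg cntA this
                  simp [cntA, ga, gb] at h2
                  have h3 := congrArg Multiplicative.toAdd h2
                  simp at h3
                · apply hx
                  refine Or.inr ⟨m - 1, ?_⟩
                  rw [hxy]
                  have : ga * gb ^ m * gb⁻¹ = ga * gb ^ (m - 1) := by
                    rw [show m = (m - 1) + 1 by omega, pow_succ, ← mul_assoc, mul_inv_cancel_right]
                    simp [show m - 1 + 1 - 1 = m - 1 by omega]
                  rw [Prod.inv_mk, Prod.mk_mul_mk, this]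
                  simp [Prod.ext_iff]
                  decide
              · -- s = (ga⁻¹, z0) : x = (ab^m a, z)
                have hx1 : x.1 = ga * gb ^ m * ga := by rw [hxy]; simp
                rw [hx1] at hnorm
                have := norm_abna_pos m
                omega
              · -- s = (gb⁻¹, z0) : x = (ab^(m+1), z)
                apply hx
                refine Or.inr ⟨m + 1, ?_⟩
                rw [hxy, Prod.inv_mk, Prod.mk_mul_mk, inv_inv]
                have hfst : ga * gb ^ m * gb = ga * gb ^ (m + 1) := by
                  rw [pow_succ, mul_assoc]
                have hsnd : z * z0⁻¹ = z := by
                  have hz0 : (z0 : Multiplicative (ZMod 2))⁻¹ = 1 := by decide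
                  rw [hz0, mul_one]
                rw [hfst, hsnd]
              · -- s = (ga, z1) : x = (ab^m a⁻¹, z * z1⁻¹)
                rcases Nat.eq_zero_or_pos m with rfl | hm
                · exact hx (Or.inl (wl_eq_zero (by omega)))
                · have hx1 : x.1 = ga * gb ^ m * ga⁻¹ := by rw [hxy]; rfl
                  rw [hx1] at hnorm
                  have := norm_abna_neg m (by omega)
                  omega
              · -- s = (ga⁻¹, z1) : x = (ab^m a, z * z1⁻¹)
                have hx1 : x.1 = ga * gb ^ m * ga := by rw [hxy]; simp
                rw [hx1] at hnorm
                have := norm_abna_pos m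
                omega
          rw [truncKernel2, if_pos hwl, hker, zero_mul]
        · rw [truncKernel2, if_neg hwl, zero_mul]
    · rw [hout y hyH, mul_zero]

end Harmonic

section Final

variable {α : ℝ}

lemma harm0 (hα1 : α < 1) : InfHarmonic2 α (h0fun α) :=
  harmonic_main hα1 z0 (Or.inl rfl) _
    (fun x hx => if_pos (hx : x ∈ H0set))
    (fun x hx => if_neg (hx : x ∉ H0set))

lemma harm1 (hα1 : α < 1) : InfHarmonic2 α (h1fun α) :=
  harmonic_main hα1 z1 (Or.inr rfl) _
    (fun x hx => if_pos (hx : x ∈ H1set))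
    (fun x hx => if_neg (hx : x ∉ H1set))

lemma h0_one : h0fun α 1 = 1 := by
  have h : (1 : Gamma2) ∈ H0set := Or.inl rfl
  rw [h0fun, if_pos h, wl_one, pow_zero]

lemma h1_one : h1fun α 1 = 1 := by
  have h : (1 : Gamma2) ∈ H1set := Or.inl rfl
  rw [h1fun, if_pos h, wl_one, pow_zero]

lemma Sgen_finite : Sgen.Finite := by
  have : Sgen = insert (ga, z0) (insert (gb, z0) (insert (ga⁻¹, z0)
      (insert (gb⁻¹, z0) (insert (ga, z1) ({(ga⁻¹, z1)} : Set Gamma2))))) := rfl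
  rw [this]
  exact ((((((Set.finite_singleton _).insert _).insert _).insert _).insert _).insert _)

lemma support_fin (x : Gamma2) (h : Gamma2 → ℝ) :
    (Function.support fun y => truncKernel2 α x y * h y).Finite := by
  apply Set.Finite.subset (Set.Finite.insert x (Sgen_finite.image (fun s => x * s)))
  intro y hy
  have hK : truncKernel2 α x y ≠ 0 := fun h0 => hy (by simp [Function.mem_support, h0])
  have hmu : mu2 α (x⁻¹ * y) ≠ 0 := by
    rw [truncKernel2] at hK
    by_cases hw : wl y = wl x + 1
    · rw [if_pos hw] at hK; exact hK
    · rw [if_neg hw] at hK; exact absurd rfl hK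
  have hcases : x⁻¹ * y = 1 ∨ x⁻¹ * y ∈ Sgen := by
    by_contra hcon
    push_neg at hcon
    exact hmu (mu2_eq_zero hcon.1 hcon.2)
  rcases hcases with hc | hc
  · left
    have : y = x := by
      have := congrArg (x * ·) hc
      simpa [mul_inv_cancel_left] using this
    exact this
  · right
    exact ⟨x⁻¹ * y, hc, by simp [mul_inv_cancel_left]⟩

lemma harm2 (hα1 : α < 1) : InfHarmonic2 α (h2fun α) := by
  intro x
  have h0x := harm0 hα1 x
  have h1x := harm1 hα1 x
  have hsum : ∑ᶠ y : Gamma2, (truncKernel2 α x y * h0fun α y + truncKernel2 α x y * h1fun α y)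
      = (∑ᶠ y : Gamma2, truncKernel2 α x y * h0fun α y)
        + ∑ᶠ y : Gamma2, truncKernel2 α x y * h1fun α y :=
    finsum_add_distrib (support_fin (α := α) x (h0fun α)) (support_fin (α := α) x (h1fun α))
  have hsupp : (Function.support fun y : Gamma2 =>
      truncKernel2 α x y * h0fun α y + truncKernel2 α x y * h1fun α y).Finite := by
    apply Set.Finite.subset ((support_fin (α := α) x (h0fun α)).union
      (support_fin (α := α) x (h1fun α)))
    intro y hy
    by_contra hcon
    simp only [Set.mem_union, Function.mem_support, not_or, not_not] at hcon
    exact hy (by simp only [Function.mem_support, not_not, hcon.1, hcon.2, add_zero])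
  calc h2fun α x = (h0fun α x + h1fun α x) / 2 := rfl
    _ = ((∑ᶠ y : Gamma2, truncKernel2 α x y * h0fun α y)
          + ∑ᶠ y : Gamma2, truncKernel2 α x y * h1fun α y) * 2⁻¹ := by
        rw [← h0x, ← h1x]; ring
    _ = (∑ᶠ y : Gamma2, (truncKernel2 α x y * h0fun α y
          + truncKernel2 α x y * h1fun α y)) * 2⁻¹ := by rw [hsum]
    _ = ∑ᶠ y : Gamma2, (truncKernel2 α x y * h0fun α y
          + truncKernel2 α x y * h1fun α y) * 2⁻¹ := finsum_mul _ (2⁻¹)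
    _ = ∑ᶠ y : Gamma2, truncKernel2 α x y * h2fun α y := by
        apply finsum_congr
        intro y
        rw [h2fun]
        ring

lemma h2_one : h2fun α 1 = 1 := by
  rw [h2fun, h0_one, h1_one]
  norm_num

lemma ga_z1_not_H0 : ((ga, z1) : Gamma2) ∉ H0set := by
  intro hcon
  rcases hcon with hc | ⟨m, hc⟩
  · rw [Prod.mk_eq_one] at hc
    exact ga_ne_one hc.1
  · have := congrArg Prod.snd hc
    simp only at this
    exact absurd this (by decide)

lemma not_minimal (hα0 : 0 < α) (hα1 : α < 1) : ¬ MinimalInfHarmonic2 α (h2fun α) := by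
  set t : ℝ := (1 - α) / 6 with ht_def
  have ht : 0 < t := by rw [ht_def]; linarith
  have htinv : 0 ≤ t⁻¹ := le_of_lt (inv_pos.mpr ht)
  have h0nn : ∀ x, 0 ≤ h0fun α x := by
    intro x
    rw [h0fun]
    split
    · exact pow_nonneg htinv _
    · exact le_refl 0
  have h1nn : ∀ x, 0 ≤ h1fun α x := by
    intro x
    rw [h1fun]
    split
    · exact pow_nonneg htinv _
    · exact le_refl 0
  intro hmin
  obtain ⟨c, hc, hcall⟩ := hmin (h0fun α) h0nn h0_one (harm0 hα1)
    ⟨2, by norm_num, fun x => by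
      have := h1nn x
      rw [h2fun]
      linarith⟩
  have hc1 : c = 1 := by
    have := hcall 1
    rw [h0_one, h2_one, mul_one] at this
    exact this.symm
  have hx := hcall (ga, z1)
  rw [hc1, one_mul, h2fun] at hx
  rw [h0fun, if_neg ga_z1_not_H0] at hx
  have h1v : h1fun α (ga, z1) = t⁻¹ := by
    have hm : ((ga, z1) : Gamma2) ∈ H1set := Or.inr ⟨0, by simp⟩
    rw [h1fun, if_pos hm, wl_ga (Or.inr rfl), pow_one, ht_def]
  rw [h1v] at hx
  have : t⁻¹ = 0 := by linarith
  rw [inv_eq_zero] at this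
  exact absurd this (ne_of_gt ht)

end Final

theorem nonminimal_infty_harmonic_on_F2_times_Z2
    (α : ℝ) (hα0 : 0 < α) (hα1 : α < 1) :
    InfHarmonic2 α (h0fun α) ∧ h0fun α 1 = 1 ∧
    InfHarmonic2 α (h1fun α) ∧ h1fun α 1 = 1 ∧
    InfHarmonic2 α (h2fun α) ∧ h2fun α 1 = 1 ∧
    ¬ MinimalInfHarmonic2 α (h2fun α) :=
  ⟨harm0 hα1, h0_one, harm1 hα1, h1_one, harm2 hα1, h2_one, not_minimal hα0 hα1⟩
end

section
/- Suppose the strong ratio-limit property holds and additionally lim_k P^{k+1}(x,y)/P^k(x,y) = R^{-1} for all x,y (Gerl's theorem). Then for every y ∈ Γ, every m ∈ ℕ and every x with (x,m) ∈ ST, and every sequence n_k → ∞ with (y,n_k) ∈ ST, one has P^{n_k − m}(x,y)/P^{n_k}(e,y) → R^m · H(x,y) as k → ∞. -/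
open Filter Topology
open scoped Classical

lemma ratio_pow_aux (g : ℕ → ℝ) (R : ℝ) (hR : 0 < R)
    (hg : Tendsto (fun k => g (k + 1) / g k) atTop (nhds R⁻¹))
    (hpos : ∀ᶠ k in atTop, g k ≠ 0) (m : ℕ) :
    Tendsto (fun n => g (n - m) / g n) atTop (nhds (R ^ m)) := by
  induction m with
  | zero =>
    simp only [Nat.sub_zero, pow_zero]
    refine Tendsto.congr' ?_ tendsto_const_nhds
    filter_upwards [hpos] with n hn
    exact (div_self hn).symm
  | succ m ih =>
    have hinv : Tendsto (fun k => g k / g (k + 1)) atTop (nhds R) := by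
      have := hg.inv₀ (inv_ne_zero hR.ne')
      simpa [inv_div] using this
    have hsub : Tendsto (fun n : ℕ => n - (m + 1)) atTop atTop :=
      tendsto_sub_atTop_nat (m + 1)
    have h1 : Tendsto (fun n => g (n - (m + 1)) / g (n - m)) atTop (nhds R) := by
      refine Tendsto.congr' ?_ (hinv.comp hsub)
      filter_upwards [eventually_ge_atTop (m + 1)] with n hn
      have : n - (m + 1) + 1 = n - m := by omega
      simp [Function.comp, this]
    have hmid : ∀ᶠ n in atTop, g (n - m) ≠ 0 :=
      (tendsto_sub_atTop_nat m).eventually hpos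
    have := h1.mul ih
    rw [show R * R ^ m = R ^ (m + 1) by ring] at this
    refine Tendsto.congr' ?_ this
    filter_upwards [hmid] with n hn
    rw [div_mul_div_comm, mul_comm (g (n - (m + 1))) (g (n - m)),
      mul_div_mul_left _ _ hn]

theorem spaceTime_kernel_limit_along_time
    {G : Type*} [Group G] [Countable G] (μ : G → ℝ)
    (hnn : ∀ x, 0 ≤ μ x) (hprob : ∑ᶠ x, μ x = 1)
    (hadm : ∀ x : G, ∃ n, 0 < convPow μ n x)
    (R : ℝ) (hR : 0 < R) (H : G → G → ℝ)
    -- strong ratio-limit property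
    (hsrlp : ∀ x y : G,
      Tendsto (fun n => convPow μ n (x⁻¹ * y) / convPow μ n y) atTop (nhds (H x y)))
    -- eventual positivity of the transition probabilities
    (hposev : ∀ x y : G, ∃ N : ℕ, ∀ k ≥ N, 0 < convPow μ k (x⁻¹ * y))
    -- Gerl's ratio limit theorem
    (hgerl : ∀ x y : G,
      Tendsto (fun k => convPow μ (k + 1) (x⁻¹ * y) / convPow μ k (x⁻¹ * y))
        atTop (nhds R⁻¹)) :
    ∀ (y : G) (m : ℕ) (x : G), 0 < convPow μ m x →
      ∀ nk : ℕ → ℕ, Tendsto nk atTop atTop → (∀ k, 0 < convPow μ (nk k) y) →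
        Tendsto (fun k => convPow μ (nk k - m) (x⁻¹ * y) / convPow μ (nk k) y)
          atTop (nhds (R ^ m * H x y)) := by
  intro y m x _ nk hnk _
  set z := x⁻¹ * y with hz
  have hpos : ∀ᶠ k in atTop, convPow μ k z ≠ 0 := by
    obtain ⟨N, hN⟩ := hposev x y
    filter_upwards [eventually_ge_atTop N] with k hk
    exact (hN k hk).ne'
  have h1 : Tendsto (fun n => convPow μ (n - m) z / convPow μ n z) atTop
      (nhds (R ^ m)) := ratio_pow_aux _ R hR (hgerl x y) hpos m
  have h2 := (h1.comp hnk).mul ((hsrlp x y).comp hnk)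
  refine Tendsto.congr' ?_ h2
  filter_upwards [hnk.eventually hpos] with k hk
  simp only [Function.comp]
  rw [div_mul_div_comm, mul_comm (convPow μ (nk k - m) z) (convPow μ (nk k) z),
    mul_div_mul_left _ _ hk]
end
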